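/- Let G₂ be the integer polynomial G₂(y₀,y₁,y₂) = 236y₀⁶ − 740y₀⁵y₁ + 1268y₀⁴y₁² − 1092y₀³y₁³ + 624y₀²y₁⁴ − 164y₀y₁⁵ + 32y₁⁶ − 616y₀⁵y₂ + 416y₀⁴y₁y₂ − 96y₀³y₁²y₂ − 976y₀²y₁³y₂ + 548y₀y₁⁴y₂ − 288y₁⁵y₂ + 1236y₀⁴y₂² − 456y₀³y₁y₂² + 1484y₀²y₁²y₂² − 356y₀y₁³y₂² + 676y₁⁴y₂² − 1332y₀³y₂³ − 804y₀²y₁y₂³ − 372y₀y₁²y₂³ − 1024y₁³y₂³ + 1036y₀²y₂⁴ + 768y₀y₁y₂⁴ + 812y₁²y₂⁴ − 472y₀y₂⁵ − 388y₁y₂⁵ + 40y₂⁶. Then there exists w in the field ℚ₂ of 2-adic numbers such that w² = G₂(−3,−1,1); consequently [−3,−1,1,w] is a ℚ₂-point of the surface w² = G₂(y₀,y₁,y₂) in P(1,1,1,3). -/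

import Mathlib

/-- The explicit sextic `G₂` defining the K3 surface `X₂` by `w² = G₂(y₀,y₁,y₂)`. -/
def G2 {R : Type*} [CommRing R] (y0 y1 y2 : R) : R :=
  236*y0^6 - 740*y0^5*y1 + 1268*y0^4*y1^2 - 1092*y0^3*y1^3 + 624*y0^2*y1^4 - 164*y0*y1^5 + 32*y1^6 - 616*y0^5*y2 + 416*y0^4*y1*y2 - 96*y0^3*y1^2*y2 - 976*y0^2*y1^3*y2 + 548*y0*y1^4*y2 - 288*y1^5*y2 + 1236*y0^4*y2^2 - 456*y0^3*y1*y2^2 + 1484*y0^2*y1^2*y2^2 - 356*y0*y1^3*y2^2 + 676*y1^4*y2^2 - 1332*y0^3*y2^3 - 804*y0^2*y1*y2^3 - 372*y0*y1^2*y2^3 - 1024*y1^3*y2^3 + 1036*y0^2*y2^4 + 768*y0*y1*y2^4 + 812*y1^2*y2^4 - 472*y0*y2^5 - 388*y1*y2^5 + 40*y2^6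

theorem stmt_8 : ∃ w : ℚ_[2], w ^ 2 = G2 (-3 : ℚ_[2]) (-1) 1 := by
  have hG : G2 (-3 : ℚ_[2]) (-1) 1 = 357008 := by norm_num [G2]
  -- find a square root of 22313 in ℤ_[2] via Hensel's lemma
  set F : Polynomial ℤ_[2] := Polynomial.X ^ 2 - Polynomial.C 22313 with hF
  have he : F.eval 1 = -22312 := by simp [hF]; norm_num
  have hd : F.derivative.eval 1 = 2 := by simp [hF]; norm_num
  have hnorm : ‖F.eval 1‖ < ‖F.derivative.eval 1‖ ^ 2 := by
    rw [he, hd]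
    have h2 : ‖(2 : ℤ_[2])‖ = (2 : ℝ)⁻¹ := by
      simpa using PadicInt.norm_p (p := 2)
    have hfac : (-22312 : ℤ_[2]) = 2 ^ 3 * (-2789) := by norm_num
    have hle : ‖(-22312 : ℤ_[2])‖ ≤ (2 : ℝ)⁻¹ ^ 3 := by
      rw [hfac]
      simp only [norm_mul, norm_pow, norm_neg, h2]
      calc ((2:ℝ)⁻¹) ^ 3 * ‖(2789 : ℤ_[2])‖ ≤ ((2:ℝ)⁻¹) ^ 3 * 1 := by
            gcongr; exact PadicInt.norm_le_one _
        _ = ((2:ℝ)⁻¹) ^ 3 := by ring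
    calc ‖(-22312 : ℤ_[2])‖ ≤ (2 : ℝ)⁻¹ ^ 3 := hle
      _ < ((2:ℝ)⁻¹) ^ 2 := by norm_num
      _ = ‖(2 : ℤ_[2])‖ ^ 2 := by rw [h2]
  obtain ⟨z, hz, -⟩ := hensels_lemma hnorm
  have hz2 : z ^ 2 = 22313 := by
    have := hz
    simp [hF, sub_eq_zero] at this
    exact this
  refine ⟨4 * (z : ℚ_[2]), ?_⟩
  have : ((z : ℚ_[2])) ^ 2 = 22313 := by
    have := congrArg (fun t : ℤ_[2] => (t : ℚ_[2])) hz2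
    push_cast at this
    exact this
  rw [hG]
  rw [mul_pow, this]
  norm_num
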